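/- Let S and A be finite nonempty sets, let γ ∈ [0,1), let T : S × A → PMF(S) be a transition kernel, let ρ₀ be a probability distribution on S, and let r : S × A → ℝ satisfy |r(s,a)| ≤ R_MAX for all (s,a). Let β > 0, ε ≥ 0, δ ≥ 0 be real numbers, and let f, f̃ : S × A → ℝ satisfy |f(s,a) − f̃(s,a)| ≤ ε for all (s,a). Let π_θ and π̃_θ be the stationary policies whose action distribution at each state s is the softmax distribution on A with inverse temperature β and logits f(s,·) and f̃(s,·) respectively, and let π_E be any stationary policy. Assume Σ_{s∈S} d_{π_E}(s) · D_KL(π_E(·|s) ‖ π̃_θ(·|s)) ≤ δ, where d_{π_E} is the discounted state occupancy measure of π_E. Then the expected discounted returns satisfy |J(π_E) − J(π_θ)| ≤ (2 R_MAX / (1−γ)²) · ( sinh(2βε) + √2 · √δ ). -/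

import Mathlib

/-- The softmax distribution on a finite set `A` with inverse temperature `β`
and logits `x`. -/
noncomputable def softmax {A : Type*} [Fintype A] (β : ℝ) (x : A → ℝ) (a : A) : ℝ :=
  Real.exp (β * x a) / ∑ a' : A, Real.exp (β * x a')

/-- The Kullback–Leibler divergence between two distributions on a finite set,
summed over the support of `p`. -/
noncomputable def klDiv {A : Type*} [Fintype A] (p q : A → ℝ) : ℝ :=
  ∑ a ∈ Finset.univ.filter (fun a : A => 0 < p a), p a * Real.log (p a / q a)

/-- `stateDist T π ρ₀ t s` is the probability `P(s_t = s | π)` that the Markov chain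
induced by the policy `π` in the MDP with transition kernel `T` and initial state
distribution `ρ₀` is in state `s` at time `t`. -/
noncomputable def stateDist {S A : Type*} [Fintype S] [Fintype A]
    (T : S → A → PMF S) (π : S → PMF A) (ρ₀ : PMF S) : ℕ → S → ℝ
  | 0, s => (ρ₀ s).toReal
  | t + 1, s' =>
      ∑ s : S, ∑ a : A, stateDist T π ρ₀ t s * ((π s) a).toReal * ((T s a) s').toReal

/-- The discounted state occupancy measure `d_π(s) = (1−γ) Σ_t γ^t P(s_t = s | π)`. -/
noncomputable def stateOcc {S A : Type*} [Fintype S] [Fintype A]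
    (T : S → A → PMF S) (π : S → PMF A) (ρ₀ : PMF S) (γ : ℝ) (s : S) : ℝ :=
  (1 - γ) * ∑' t : ℕ, γ ^ t * stateDist T π ρ₀ t s

/-- The expected discounted return `J(π) = E[Σ_t γ^t r(s_t, a_t)]`. -/
noncomputable def expReturn {S A : Type*} [Fintype S] [Fintype A]
    (T : S → A → PMF S) (π : S → PMF A) (ρ₀ : PMF S) (γ : ℝ) (r : S → A → ℝ) : ℝ :=
  ∑' t : ℕ, γ ^ t * ∑ s : S, ∑ a : A, stateDist T π ρ₀ t s * ((π s) a).toReal * r s a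

section Info
open Finset

variable {A : Type*} [Fintype A]

lemma sum_filter_pos (p : A → ℝ) (hp : ∀ a, 0 ≤ p a) :
    ∑ a ∈ Finset.univ.filter (fun a : A => 0 < p a), p a = ∑ a : A, p a :=
  Finset.sum_filter_of_ne (fun a _ h => lt_of_le_of_ne (hp a) (Ne.symm h))

lemma klDiv_nonneg (p q : A → ℝ) (hp : ∀ a, 0 ≤ p a) (hq : ∀ a, 0 < q a)
    (hp1 : ∑ a : A, p a = 1) (hq1 : ∑ a : A, q a = 1) : 0 ≤ klDiv p q := by
  have key : ∀ a ∈ Finset.univ.filter (fun a : A => 0 < p a),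
      p a * Real.log (q a / p a) ≤ q a - p a := by
    intro a ha
    have hpa : 0 < p a := (Finset.mem_filter.1 ha).2
    have h1 : Real.log (q a / p a) ≤ q a / p a - 1 :=
      Real.log_le_sub_one_of_pos (div_pos (hq a) hpa)
    calc p a * Real.log (q a / p a) ≤ p a * (q a / p a - 1) := by
          exact mul_le_mul_of_nonneg_left h1 hpa.le
      _ = q a - p a := by field_simp
  have h2 : ∑ a ∈ Finset.univ.filter (fun a : A => 0 < p a), (q a - p a) ≤ 0 := by
    rw [Finset.sum_sub_distrib, sum_filter_pos p hp, hp1]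
    have : ∑ a ∈ Finset.univ.filter (fun a : A => 0 < p a), q a ≤ ∑ a : A, q a :=
      Finset.sum_le_sum_of_subset_of_nonneg (Finset.filter_subset _ _)
        (fun a _ _ => (hq a).le)
    linarith [hq1 ▸ this]
  have h3 : ∑ a ∈ Finset.univ.filter (fun a : A => 0 < p a), p a * Real.log (q a / p a) ≤ 0 :=
    le_trans (Finset.sum_le_sum key) h2
  have h4 : klDiv p q = - ∑ a ∈ Finset.univ.filter (fun a : A => 0 < p a),
      p a * Real.log (q a / p a) := by
    rw [← Finset.sum_neg_distrib]
    apply Finset.sum_congr rfl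
    intro a ha
    have hpa : 0 < p a := (Finset.mem_filter.1 ha).2
    rw [← mul_neg, ← Real.log_inv, inv_div]
  linarith [h4 ▸ neg_nonneg.2 h3]

/-- Bretagnolle–Huber-style bound: `ΣΣ|p−q| ≤ 2√KL`. -/
lemma l1_le_two_sqrt_klDiv (p q : A → ℝ) (hp : ∀ a, 0 ≤ p a) (hq : ∀ a, 0 < q a)
    (hp1 : ∑ a : A, p a = 1) (hq1 : ∑ a : A, q a = 1) :
    ∑ a : A, |p a - q a| ≤ 2 * Real.sqrt (klDiv p q) := by
  set K := klDiv p q with hK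
  have hK0 : 0 ≤ K := klDiv_nonneg p q hp hq hp1 hq1
  set m := ∑ a : A, min (p a) (q a) with hm
  have hmin_nonneg : ∀ a, 0 ≤ min (p a) (q a) := fun a => le_min (hp a) (hq a).le
  -- |p-q| = p + q - 2 min
  have habs : ∀ a : A, |p a - q a| = p a + q a - 2 * min (p a) (q a) := by
    intro a
    rcases le_total (p a) (q a) with h | h
    · rw [abs_of_nonpos (by linarith), min_eq_left h]; ring
    · rw [abs_of_nonneg (by linarith), min_eq_right h]; ring
  have hsumabs : ∑ a : A, |p a - q a| = 2 - 2 * m := by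
    simp only [habs]
    rw [Finset.sum_sub_distrib, Finset.sum_add_distrib, hp1, hq1, ← Finset.mul_sum]
    ring
  -- Jensen: ∑_{p>0} √(p q) ≥ exp(-K/2)
  set t := Finset.univ.filter (fun a : A => 0 < p a) with ht
  have hpt1 : ∑ a ∈ t, p a = 1 := by rw [ht, sum_filter_pos p hp]; exact hp1
  have hjensen : Real.exp (-(K/2)) ≤ ∑ a ∈ t, p a * Real.sqrt (q a / p a) := by
    have hconv := convexOn_exp
    have harg : ∀ a ∈ t, p a * Real.log (Real.sqrt (q a / p a))
        = -(p a * Real.log (p a / q a) / 2) := by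
      intro a ha
      have hpa : 0 < p a := (Finset.mem_filter.1 ha).2
      have hlg : Real.log (p a / q a) = - Real.log (q a / p a) := by
        rw [← Real.log_inv, inv_div]
      rw [Real.log_sqrt (div_pos (hq a) hpa).le, hlg]
      ring
    have hsum : ∑ a ∈ t, p a * Real.log (Real.sqrt (q a / p a)) = -(K/2) := by
      rw [Finset.sum_congr rfl harg, Finset.sum_neg_distrib, ← Finset.sum_div]
      rw [hK]; rfl
    have h := hconv.map_sum_le (t := t) (w := p) (p := fun a => Real.log (Real.sqrt (q a / p a)))
      (fun a _ => hp a) hpt1 (fun a _ => Set.mem_univ _)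
    simp only [smul_eq_mul] at h
    rw [hsum] at h
    refine le_trans h (le_of_eq (Finset.sum_congr rfl (fun a ha => ?_)))
    have hpa : 0 < p a := (Finset.mem_filter.1 ha).2
    rw [Real.exp_log (Real.sqrt_pos.2 (div_pos (hq a) hpa))]
  have hps : ∀ a ∈ t, p a * Real.sqrt (q a / p a) = Real.sqrt (p a * q a) := by
    intro a ha
    have hpa : 0 < p a := (Finset.mem_filter.1 ha).2
    rw [show p a = Real.sqrt ((p a)^2) from (Real.sqrt_sq hpa.le).symm]
    rw [← Real.sqrt_mul (sq_nonneg _)]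
    rw [Real.sqrt_sq hpa.le]
    congr 1
    field_simp
  -- so  exp(-K/2) ≤ ∑_t √(pq) ≤ ∑_univ √(pq)
  have hsqrt_sum : Real.exp (-(K/2)) ≤ ∑ a : A, Real.sqrt (p a * q a) := by
    refine le_trans (hjensen.trans_eq (Finset.sum_congr rfl hps)) ?_
    exact Finset.sum_le_sum_of_subset_of_nonneg (Finset.filter_subset _ _)
      (fun a _ _ => Real.sqrt_nonneg _)
  -- Cauchy–Schwarz: (∑ √(pq))² ≤ m (2 - m)
  have hcs : (∑ a : A, Real.sqrt (p a * q a))^2 ≤ m * (2 - m) := by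
    have h1 : ∀ a : A, Real.sqrt (p a * q a)
        = Real.sqrt (min (p a) (q a)) * Real.sqrt (max (p a) (q a)) := by
      intro a
      rw [← Real.sqrt_mul (hmin_nonneg a), min_mul_max]
    have h2 := Finset.sum_mul_sq_le_sq_mul_sq Finset.univ
      (fun a => Real.sqrt (min (p a) (q a))) (fun a => Real.sqrt (max (p a) (q a)))
    simp only [Real.sq_sqrt (hmin_nonneg _),
      Real.sq_sqrt (le_trans (hp _) (le_max_left _ _))] at h2
    have hmax : ∑ a : A, max (p a) (q a) = 2 - m := by
      have : ∀ a : A, max (p a) (q a) = p a + q a - min (p a) (q a) := by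
        intro a; rcases le_total (p a) (q a) with h | h
        · rw [max_eq_right h, min_eq_left h]; ring
        · rw [max_eq_left h, min_eq_right h]; ring
      simp only [this]
      rw [Finset.sum_sub_distrib, Finset.sum_add_distrib, hp1, hq1, ← hm]
      ring
    calc (∑ a : A, Real.sqrt (p a * q a))^2
        = (∑ a : A, Real.sqrt (min (p a) (q a)) * Real.sqrt (max (p a) (q a)))^2 := by
          rw [Finset.sum_congr rfl (fun a _ => h1 a)]
      _ ≤ (∑ a : A, min (p a) (q a)) * (∑ a : A, max (p a) (q a)) := h2
      _ = m * (2 - m) := by rw [← hm, hmax]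
  -- combine: (1-m)² ≤ 1 - e^{-K} ≤ K
  have hexpK : Real.exp (-K) ≤ m * (2 - m) := by
    have h := hsqrt_sum
    have hnn : 0 ≤ ∑ a : A, Real.sqrt (p a * q a) :=
      Finset.sum_nonneg (fun a _ => Real.sqrt_nonneg _)
    have : Real.exp (-(K/2)) ^ 2 ≤ (∑ a : A, Real.sqrt (p a * q a))^2 :=
      pow_le_pow_left₀ (Real.exp_pos _).le h 2
    rw [← Real.exp_nat_mul] at this
    calc Real.exp (-K) = Real.exp ((2:ℕ) * (-(K/2))) := by
          congr 1; push_cast; ring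
      _ ≤ (∑ a : A, Real.sqrt (p a * q a))^2 := this
      _ ≤ m * (2 - m) := hcs
  have hm1 : m ≤ 1 := by
    have : ∀ a : A, min (p a) (q a) ≤ p a := fun a => min_le_left _ _
    calc m ≤ ∑ a : A, p a := Finset.sum_le_sum (fun a _ => this a)
      _ = 1 := hp1
  have hfinal : (1 - m)^2 ≤ K := by
    have h1 : 1 - K ≤ Real.exp (-K) := by
      have := Real.add_one_le_exp (-K); linarith
    nlinarith [hexpK]
  have h1m : 0 ≤ 1 - m := by linarith
  have : 1 - m ≤ Real.sqrt K := (Real.le_sqrt h1m hK0).2 hfinal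
  rw [hsumabs]
  linarith

end Info

section Soft
variable {A : Type*} [Fintype A] [Nonempty A]

lemma softmax_denom_pos (β : ℝ) (x : A → ℝ) : 0 < ∑ a' : A, Real.exp (β * x a') :=
  Finset.sum_pos (fun a _ => Real.exp_pos _) Finset.univ_nonempty

lemma softmax_pos (β : ℝ) (x : A → ℝ) (a : A) : 0 < softmax β x a :=
  div_pos (Real.exp_pos _) (softmax_denom_pos β x)

lemma softmax_sum_one (β : ℝ) (x : A → ℝ) : ∑ a : A, softmax β x a = 1 := by
  unfold softmax
  rw [← Finset.sum_div, div_self (softmax_denom_pos β x).ne']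

lemma softmax_le (β ε : ℝ) (hβ : 0 < β) (hε : 0 ≤ ε) (x y : A → ℝ)
    (hxy : ∀ a, |x a - y a| ≤ ε) (a : A) :
    softmax β x a ≤ Real.exp (2 * β * ε) * softmax β y a := by
  have hnum : Real.exp (β * x a) ≤ Real.exp (β * ε) * Real.exp (β * y a) := by
    rw [← Real.exp_add]
    apply Real.exp_le_exp.2
    have := (abs_le.1 (hxy a)).2
    nlinarith
  have hden : ∑ a' : A, Real.exp (β * y a') ≤ Real.exp (β * ε) * ∑ a' : A, Real.exp (β * x a') := by
    rw [Finset.mul_sum]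
    apply Finset.sum_le_sum
    intro a' _
    rw [← Real.exp_add]
    apply Real.exp_le_exp.2
    have := (abs_le.1 (hxy a')).1
    nlinarith
  unfold softmax
  rw [div_le_iff₀ (softmax_denom_pos β x)]
  have hq : 0 < Real.exp (β * y a) / ∑ a' : A, Real.exp (β * y a') :=
    div_pos (Real.exp_pos _) (softmax_denom_pos β y)
  calc Real.exp (β * x a) ≤ Real.exp (β * ε) * Real.exp (β * y a) := hnum
    _ = (Real.exp (β * ε) * Real.exp (β * y a) / ∑ a' : A, Real.exp (β * y a'))
        * ∑ a' : A, Real.exp (β * y a') := by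
        field_simp
    _ ≤ (Real.exp (β * ε) * Real.exp (β * y a) / ∑ a' : A, Real.exp (β * y a'))
        * (Real.exp (β * ε) * ∑ a' : A, Real.exp (β * x a')) := by
        apply mul_le_mul_of_nonneg_left hden
        positivity
    _ = Real.exp (2 * β * ε) * (Real.exp (β * y a) / ∑ a' : A, Real.exp (β * y a'))
        * ∑ a' : A, Real.exp (β * x a') := by
        rw [show (2:ℝ) * β * ε = β * ε + β * ε by ring, Real.exp_add]
        field_simp

lemma softmax_l1 (β ε : ℝ) (hβ : 0 < β) (hε : 0 ≤ ε) (x y : A → ℝ)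
    (hxy : ∀ a, |x a - y a| ≤ ε) :
    ∑ a : A, |softmax β x a - softmax β y a| ≤ 2 * Real.sinh (2 * β * ε) := by
  set c := 2 * β * ε with hc
  have hc0 : 0 ≤ c := by positivity
  have hxy' : ∀ a, |y a - x a| ≤ ε := fun a => by rw [abs_sub_comm]; exact hxy a
  have key : ∀ a : A, |softmax β x a - softmax β y a| ≤ (Real.exp c - 1) * softmax β y a := by
    intro a
    have h1 := softmax_le β ε hβ hε x y hxy a
    have h2 := softmax_le β ε hβ hε y x hxy' a
    have hya := softmax_pos β y a
    have hxa := softmax_pos β x a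
    have hec : 1 ≤ Real.exp c := Real.one_le_exp hc0
    rw [abs_le]
    constructor
    ·
      -- from h2 : y ≤ e^c x, so y - x ≤ y - e^{-c} y = (1 - e^{-c}) y ≤ (e^c -1) y
      have hx_ge : Real.exp (-c) * softmax β y a ≤ softmax β x a := by
        rw [Real.exp_neg]
        rw [inv_mul_le_iff₀ (Real.exp_pos c), mul_comm] at *
        · exact h2
      have hcc : Real.exp (-c) ≥ 2 - Real.exp c := by
        nlinarith [Real.add_one_le_exp (-c), Real.add_one_le_exp c, Real.exp_pos c]
      nlinarith
    · nlinarith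
  calc ∑ a : A, |softmax β x a - softmax β y a|
      ≤ ∑ a : A, (Real.exp c - 1) * softmax β y a := Finset.sum_le_sum (fun a _ => key a)
    _ = Real.exp c - 1 := by rw [← Finset.mul_sum, softmax_sum_one, mul_one]
    _ ≤ 2 * Real.sinh c := by
        rw [Real.sinh_eq]
        have h1 : Real.exp (-c) ≤ 1 := Real.exp_le_one_iff.2 (by linarith)
        have h2 : 2 * ((Real.exp c - Real.exp (-c)) / 2) = Real.exp c - Real.exp (-c) := by
          ring
        rw [h2]
        linarith

end Soft

lemma pmf_sum_one {A : Type*} [Fintype A] (p : PMF A) : ∑ a : A, (p a).toReal = 1 := by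
  have h : ∑' a : A, p a = 1 := p.tsum_coe
  rw [tsum_fintype] at h
  rw [← ENNReal.toReal_sum (fun a _ => PMF.apply_ne_top p a), h, ENNReal.toReal_one]

section MDP
variable {S A : Type*} [Fintype S] [Fintype A]
  (T : S → A → PMF S) (π : S → PMF A) (ρ₀ : PMF S)

lemma stateDist_nonneg : ∀ t s, 0 ≤ stateDist T π ρ₀ t s := by
  intro t
  induction t with
  | zero => intro s; exact ENNReal.toReal_nonneg
  | succ t ih =>
    intro s'
    apply Finset.sum_nonneg; intro s _
    apply Finset.sum_nonneg; intro a _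
    have := ih s
    positivity

lemma stateDist_sum_one : ∀ t, ∑ s : S, stateDist T π ρ₀ t s = 1 := by
  intro t
  induction t with
  | zero => exact pmf_sum_one ρ₀
  | succ t ih =>
    show ∑ s' : S, ∑ s : S, ∑ a : A, stateDist T π ρ₀ t s * ((π s) a).toReal * ((T s a) s').toReal = 1
    rw [Finset.sum_comm]
    have h1 : ∀ s : S, ∑ s' : S, ∑ a : A, stateDist T π ρ₀ t s * ((π s) a).toReal * ((T s a) s').toReal
        = stateDist T π ρ₀ t s := by
      intro s
      rw [Finset.sum_comm]
      have h2 : ∀ a : A, ∑ s' : S, stateDist T π ρ₀ t s * ((π s) a).toReal * ((T s a) s').toReal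
          = stateDist T π ρ₀ t s * ((π s) a).toReal := by
        intro a
        rw [← Finset.mul_sum, pmf_sum_one, mul_one]
      simp only [h2, ← Finset.mul_sum, pmf_sum_one, mul_one]
    simp only [h1, ih]

lemma stateDist_le_one (t : ℕ) (s : S) : stateDist T π ρ₀ t s ≤ 1 := by
  rw [← stateDist_sum_one T π ρ₀ t]
  exact Finset.single_le_sum (fun s _ => stateDist_nonneg T π ρ₀ t s) (Finset.mem_univ s)

variable (γ : ℝ)

lemma stateOcc_nonneg (hγ0 : 0 ≤ γ) (hγ1 : γ < 1) (s : S) : 0 ≤ stateOcc T π ρ₀ γ s := by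
  unfold stateOcc
  apply mul_nonneg (by linarith)
  apply tsum_nonneg
  intro t
  exact mul_nonneg (pow_nonneg hγ0 t) (stateDist_nonneg T π ρ₀ t s)

lemma summable_dist (hγ0 : 0 ≤ γ) (hγ1 : γ < 1) (s : S) : Summable (fun t : ℕ => γ ^ t * stateDist T π ρ₀ t s) := by
  apply Summable.of_nonneg_of_le
    (fun t => mul_nonneg (pow_nonneg hγ0 t) (stateDist_nonneg T π ρ₀ t s))
    (fun t => ?_) (summable_geometric_of_lt_one hγ0 hγ1)
  calc γ ^ t * stateDist T π ρ₀ t s ≤ γ ^ t * 1 :=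
        mul_le_mul_of_nonneg_left (stateDist_le_one T π ρ₀ t s) (pow_nonneg hγ0 t)
    _ = γ ^ t := mul_one _

lemma stateOcc_sum_one (hγ0 : 0 ≤ γ) (hγ1 : γ < 1) : ∑ s : S, stateOcc T π ρ₀ γ s = 1 := by
  unfold stateOcc
  rw [← Finset.mul_sum]
  rw [← Summable.tsum_finsetSum (fun s _ => summable_dist T π ρ₀ γ hγ0 hγ1 s)]
  have h : ∀ t : ℕ, ∑ s : S, γ ^ t * stateDist T π ρ₀ t s = γ ^ t := by
    intro t
    rw [← Finset.mul_sum, stateDist_sum_one, mul_one]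
  rw [tsum_congr h, tsum_geometric_of_lt_one hγ0 hγ1]
  have : (1:ℝ) - γ ≠ 0 := by linarith
  field_simp

end MDP

section Perf
variable {S A : Type*} [Fintype S] [Fintype A]

lemma perf_diff (γ : ℝ) (hγ0 : 0 ≤ γ) (hγ1 : γ < 1)
    (T : S → A → PMF S) (ρ₀ : PMF S)
    (r : S → A → ℝ) (Rmax : ℝ) (hr : ∀ s a, |r s a| ≤ Rmax) (hR : 0 ≤ Rmax)
    (π π' : S → PMF A) :
    |expReturn T π ρ₀ γ r - expReturn T π' ρ₀ γ r| ≤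
      (Rmax / (1 - γ) ^ 2) * ∑ s : S, stateOcc T π ρ₀ γ s *
        (∑ a : A, |((π s) a).toReal - ((π' s) a).toReal|) := by
  have h1γ : (0:ℝ) < 1 - γ := by linarith
  set D : ℕ → S → ℝ := stateDist T π ρ₀ with hD
  set D' : ℕ → S → ℝ := stateDist T π' ρ₀ with hD'
  set c : S → ℝ := fun s => ∑ a : A, |((π s) a).toReal - ((π' s) a).toReal| with hc
  set e : ℕ → ℝ := fun t => ∑ s : S, D t s * c s with he
  set Δ : ℕ → ℝ := fun t => ∑ s : S, |D t s - D' t s| with hΔdef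
  have hD0 : ∀ t s, 0 ≤ D t s := stateDist_nonneg T π ρ₀
  have hD'0 : ∀ t s, 0 ≤ D' t s := stateDist_nonneg T π' ρ₀
  have hDs : ∀ t, ∑ s : S, D t s = 1 := stateDist_sum_one T π ρ₀
  have hD's : ∀ t, ∑ s : S, D' t s = 1 := stateDist_sum_one T π' ρ₀
  have hc0 : ∀ s, 0 ≤ c s := fun s => Finset.sum_nonneg (fun a _ => abs_nonneg _)
  have hc2 : ∀ s, c s ≤ 2 := by
    intro s
    have : ∀ a : A, |((π s) a).toReal - ((π' s) a).toReal|
        ≤ ((π s) a).toReal + ((π' s) a).toReal := by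
      intro a
      have h1 : (0:ℝ) ≤ ((π s) a).toReal := ENNReal.toReal_nonneg
      have h2 : (0:ℝ) ≤ ((π' s) a).toReal := ENNReal.toReal_nonneg
      rw [abs_le]; constructor <;> linarith
    calc c s ≤ ∑ a : A, (((π s) a).toReal + ((π' s) a).toReal) :=
          Finset.sum_le_sum (fun a _ => this a)
      _ = 2 := by rw [Finset.sum_add_distrib, pmf_sum_one, pmf_sum_one]; norm_num
  have he0 : ∀ t, 0 ≤ e t :=
    fun t => Finset.sum_nonneg (fun s _ => mul_nonneg (hD0 t s) (hc0 s))
  have he2 : ∀ t, e t ≤ 2 := by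
    intro t
    calc e t ≤ ∑ s : S, D t s * 2 :=
          Finset.sum_le_sum (fun s _ => mul_le_mul_of_nonneg_left (hc2 s) (hD0 t s))
      _ = 2 := by rw [← Finset.sum_mul, hDs]; norm_num
  have hΔ0 : ∀ t, 0 ≤ Δ t := fun t => Finset.sum_nonneg (fun s _ => abs_nonneg _)
  have hΔ2 : ∀ t, Δ t ≤ 2 := by
    intro t
    have : ∀ s : S, |D t s - D' t s| ≤ D t s + D' t s := by
      intro s
      have := hD0 t s; have := hD'0 t s
      rw [abs_le]; constructor <;> linarith
    calc Δ t ≤ ∑ s : S, (D t s + D' t s) := Finset.sum_le_sum (fun s _ => this s)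
      _ = 2 := by rw [Finset.sum_add_distrib, hDs, hD's]; norm_num
  -- core L1 bound
  have hcore : ∀ t, ∑ s : S, ∑ a : A,
      |D t s * ((π s) a).toReal - D' t s * ((π' s) a).toReal| ≤ e t + Δ t := by
    intro t
    have hpt : ∀ s a, |D t s * ((π s) a).toReal - D' t s * ((π' s) a).toReal|
        ≤ D t s * |((π s) a).toReal - ((π' s) a).toReal|
          + |D t s - D' t s| * ((π' s) a).toReal := by
      intro s a
      have h1 : D t s * ((π s) a).toReal - D' t s * ((π' s) a).toReal
          = D t s * (((π s) a).toReal - ((π' s) a).toReal)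
            + (D t s - D' t s) * ((π' s) a).toReal := by ring
      rw [h1]
      calc |D t s * (((π s) a).toReal - ((π' s) a).toReal)
            + (D t s - D' t s) * ((π' s) a).toReal|
          ≤ |D t s * (((π s) a).toReal - ((π' s) a).toReal)|
            + |(D t s - D' t s) * ((π' s) a).toReal| := abs_add_le _ _
        _ = D t s * |((π s) a).toReal - ((π' s) a).toReal|
            + |D t s - D' t s| * ((π' s) a).toReal := by
            rw [abs_mul, abs_mul, abs_of_nonneg (hD0 t s),
              abs_of_nonneg (ENNReal.toReal_nonneg : (0:ℝ) ≤ ((π' s) a).toReal)]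
    calc ∑ s : S, ∑ a : A, |D t s * ((π s) a).toReal - D' t s * ((π' s) a).toReal|
        ≤ ∑ s : S, ∑ a : A, (D t s * |((π s) a).toReal - ((π' s) a).toReal|
            + |D t s - D' t s| * ((π' s) a).toReal) :=
          Finset.sum_le_sum (fun s _ => Finset.sum_le_sum (fun a _ => hpt s a))
      _ = e t + Δ t := by
          rw [he, hΔdef]
          simp only [Finset.sum_add_distrib, ← Finset.mul_sum, pmf_sum_one, mul_one]
          rfl
  -- recurrence for Δ
  have hrec : ∀ t, Δ (t + 1) ≤ e t + Δ t := by
    intro t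
    have hstep : Δ (t + 1) ≤ ∑ s : S, ∑ a : A,
        |D t s * ((π s) a).toReal - D' t s * ((π' s) a).toReal| := by
      have hexp : ∀ s' : S, D (t+1) s' - D' (t+1) s'
          = ∑ s : S, ∑ a : A, (D t s * ((π s) a).toReal - D' t s * ((π' s) a).toReal)
              * ((T s a) s').toReal := by
        intro s'
        show (∑ s : S, ∑ a : A, D t s * ((π s) a).toReal * ((T s a) s').toReal)
            - (∑ s : S, ∑ a : A, D' t s * ((π' s) a).toReal * ((T s a) s').toReal) = _
        rw [← Finset.sum_sub_distrib]
        apply Finset.sum_congr rfl; intro s _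
        rw [← Finset.sum_sub_distrib]
        apply Finset.sum_congr rfl; intro a _
        ring
      calc Δ (t+1) = ∑ s' : S, |∑ s : S, ∑ a : A,
            (D t s * ((π s) a).toReal - D' t s * ((π' s) a).toReal) * ((T s a) s').toReal| := by
            rw [hΔdef]; exact Finset.sum_congr rfl (fun s' _ => by rw [hexp s'])
        _ ≤ ∑ s' : S, ∑ s : S, ∑ a : A,
            |D t s * ((π s) a).toReal - D' t s * ((π' s) a).toReal| * ((T s a) s').toReal := by
            apply Finset.sum_le_sum; intro s' _
            calc |∑ s : S, ∑ a : A, (D t s * ((π s) a).toReal - D' t s * ((π' s) a).toReal)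
                  * ((T s a) s').toReal|
                ≤ ∑ s : S, |∑ a : A, (D t s * ((π s) a).toReal - D' t s * ((π' s) a).toReal)
                  * ((T s a) s').toReal| := Finset.abs_sum_le_sum_abs _ _
              _ ≤ ∑ s : S, ∑ a : A, |D t s * ((π s) a).toReal - D' t s * ((π' s) a).toReal|
                  * ((T s a) s').toReal := by
                  apply Finset.sum_le_sum; intro s _
                  calc |∑ a : A, (D t s * ((π s) a).toReal - D' t s * ((π' s) a).toReal)
                        * ((T s a) s').toReal|
                      ≤ ∑ a : A, |(D t s * ((π s) a).toReal - D' t s * ((π' s) a).toReal)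
                        * ((T s a) s').toReal| := Finset.abs_sum_le_sum_abs _ _
                    _ = ∑ a : A, |D t s * ((π s) a).toReal - D' t s * ((π' s) a).toReal|
                        * ((T s a) s').toReal := by
                        apply Finset.sum_congr rfl; intro a _
                        rw [abs_mul, abs_of_nonneg (ENNReal.toReal_nonneg :
                          (0:ℝ) ≤ ((T s a) s').toReal)]
        _ = ∑ s : S, ∑ a : A,
            |D t s * ((π s) a).toReal - D' t s * ((π' s) a).toReal| := by
            rw [Finset.sum_comm]
            apply Finset.sum_congr rfl; intro s _
            rw [Finset.sum_comm]
            apply Finset.sum_congr rfl; intro a _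
            rw [← Finset.mul_sum, pmf_sum_one, mul_one]
    exact le_trans hstep (hcore t)
  have hΔzero : Δ 0 = 0 := by
    rw [hΔdef]
    apply Finset.sum_eq_zero; intro s _
    show |stateDist T π ρ₀ 0 s - stateDist T π' ρ₀ 0 s| = 0
    show |(ρ₀ s).toReal - (ρ₀ s).toReal| = 0
    simp
  -- the key induction
  have hind : ∀ N : ℕ, ∑ t ∈ Finset.range N, γ ^ t * Δ t + γ ^ N / (1 - γ) * Δ N
      ≤ (1 / (1 - γ)) * ∑ k ∈ Finset.range N, γ ^ (k + 1) * e k := by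
    intro N
    induction N with
    | zero => simp [hΔzero]
    | succ N ih =>
      rw [Finset.sum_range_succ, Finset.sum_range_succ]
      have hrecN := hrec N
      have hγN : (0:ℝ) ≤ γ ^ N := pow_nonneg hγ0 N
      have hmul : γ ^ (N+1) / (1 - γ) * Δ (N+1) ≤ γ ^ (N+1) / (1 - γ) * (e N + Δ N) :=
        mul_le_mul_of_nonneg_left hrecN (by positivity)
      have hid : γ ^ N * Δ N + γ ^ (N+1) / (1 - γ) * (e N + Δ N)
          = γ ^ N / (1 - γ) * Δ N + (1 / (1 - γ)) * (γ ^ (N+1) * e N) := by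
        rw [pow_succ]
        field_simp
        ring
      rw [mul_add]
      linarith
  -- summability
  have hsum_e : Summable (fun t : ℕ => γ ^ t * e t) := by
    apply Summable.of_nonneg_of_le
      (fun t => mul_nonneg (pow_nonneg hγ0 t) (he0 t)) (fun t => ?_)
      ((summable_geometric_of_lt_one hγ0 hγ1).mul_left 2)
    calc γ ^ t * e t ≤ γ ^ t * 2 :=
          mul_le_mul_of_nonneg_left (he2 t) (pow_nonneg hγ0 t)
      _ = 2 * γ ^ t := by ring
  have hsum_Δ : Summable (fun t : ℕ => γ ^ t * Δ t) := by
    apply Summable.of_nonneg_of_le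
      (fun t => mul_nonneg (pow_nonneg hγ0 t) (hΔ0 t)) (fun t => ?_)
      ((summable_geometric_of_lt_one hγ0 hγ1).mul_left 2)
    calc γ ^ t * Δ t ≤ γ ^ t * 2 :=
          mul_le_mul_of_nonneg_left (hΔ2 t) (pow_nonneg hγ0 t)
      _ = 2 * γ ^ t := by ring
  set S₁ : ℝ := ∑' t : ℕ, γ ^ t * e t with hS₁
  have hS₁0 : 0 ≤ S₁ :=
    tsum_nonneg (fun t => mul_nonneg (pow_nonneg hγ0 t) (he0 t))
  have htsumΔ : ∑' t : ℕ, γ ^ t * Δ t ≤ γ / (1 - γ) * S₁ := by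
    apply Summable.tsum_le_of_sum_range_le hsum_Δ
    intro N
    have h1 := hind N
    have h2 : ∑ k ∈ Finset.range N, γ ^ (k + 1) * e k ≤ γ * S₁ := by
      have : ∀ k, γ ^ (k+1) * e k = γ * (γ ^ k * e k) := by
        intro k; rw [pow_succ]; ring
      rw [Finset.sum_congr rfl (fun k _ => this k), ← Finset.mul_sum]
      apply mul_le_mul_of_nonneg_left _ hγ0
      exact Summable.sum_le_tsum _ (fun t _ => mul_nonneg (pow_nonneg hγ0 t) (he0 t)) hsum_e
    have h3 : 0 ≤ γ ^ N / (1 - γ) * Δ N :=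
      mul_nonneg (by positivity) (hΔ0 N)
    calc ∑ t ∈ Finset.range N, γ ^ t * Δ t
        ≤ (1 / (1 - γ)) * ∑ k ∈ Finset.range N, γ ^ (k + 1) * e k := by linarith
      _ ≤ (1 / (1 - γ)) * (γ * S₁) := by
          apply mul_le_mul_of_nonneg_left h2 (by positivity)
      _ = γ / (1 - γ) * S₁ := by ring
  -- per-step return bound
  set u : ℕ → ℝ := fun t => γ ^ t * ∑ s : S, ∑ a : A, D t s * ((π s) a).toReal * r s a with hu
  set v : ℕ → ℝ := fun t => γ ^ t * ∑ s : S, ∑ a : A, D' t s * ((π' s) a).toReal * r s a with hv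
  have hbound : ∀ t, |u t - v t| ≤ Rmax * (γ ^ t * e t + γ ^ t * Δ t) := by
    intro t
    have hdiff : u t - v t = γ ^ t * ∑ s : S, ∑ a : A,
        (D t s * ((π s) a).toReal - D' t s * ((π' s) a).toReal) * r s a := by
      rw [hu, hv]
      simp only
      rw [← mul_sub, ← Finset.sum_sub_distrib]
      congr 1
      apply Finset.sum_congr rfl; intro s _
      rw [← Finset.sum_sub_distrib]
      apply Finset.sum_congr rfl; intro a _
      ring
    rw [hdiff, abs_mul, abs_pow, abs_of_nonneg hγ0]
    have habs : |∑ s : S, ∑ a : A,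
        (D t s * ((π s) a).toReal - D' t s * ((π' s) a).toReal) * r s a|
        ≤ Rmax * (e t + Δ t) := by
      calc |∑ s : S, ∑ a : A, (D t s * ((π s) a).toReal - D' t s * ((π' s) a).toReal) * r s a|
          ≤ ∑ s : S, ∑ a : A, |D t s * ((π s) a).toReal - D' t s * ((π' s) a).toReal| * Rmax := by
            refine le_trans (Finset.abs_sum_le_sum_abs _ _) (Finset.sum_le_sum fun s _ => ?_)
            refine le_trans (Finset.abs_sum_le_sum_abs _ _) (Finset.sum_le_sum fun a _ => ?_)
            rw [abs_mul]
            exact mul_le_mul_of_nonneg_left (hr s a) (abs_nonneg _)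
        _ = (∑ s : S, ∑ a : A, |D t s * ((π s) a).toReal - D' t s * ((π' s) a).toReal|) * Rmax := by
            rw [Finset.sum_mul]
            exact Finset.sum_congr rfl (fun s _ => (Finset.sum_mul _ _ _).symm)
        _ ≤ (e t + Δ t) * Rmax := mul_le_mul_of_nonneg_right (hcore t) hR
        _ = Rmax * (e t + Δ t) := by ring
    calc γ ^ t * |∑ s : S, ∑ a : A,
        (D t s * ((π s) a).toReal - D' t s * ((π' s) a).toReal) * r s a|
        ≤ γ ^ t * (Rmax * (e t + Δ t)) :=
          mul_le_mul_of_nonneg_left habs (pow_nonneg hγ0 t)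
      _ = Rmax * (γ ^ t * e t + γ ^ t * Δ t) := by ring
  have hsum_u : Summable u := by
    apply Summable.of_norm_bounded ((summable_geometric_of_lt_one hγ0 hγ1).mul_left Rmax)
    intro t
    rw [hu]
    simp only [Real.norm_eq_abs, abs_mul, abs_pow, abs_of_nonneg hγ0]
    have : |∑ s : S, ∑ a : A, D t s * ((π s) a).toReal * r s a| ≤ Rmax := by
      calc |∑ s : S, ∑ a : A, D t s * ((π s) a).toReal * r s a|
          ≤ ∑ s : S, ∑ a : A, D t s * ((π s) a).toReal * Rmax := by
            refine le_trans (Finset.abs_sum_le_sum_abs _ _) (Finset.sum_le_sum fun s _ => ?_)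
            refine le_trans (Finset.abs_sum_le_sum_abs _ _) (Finset.sum_le_sum fun a _ => ?_)
            rw [abs_mul, abs_mul, abs_of_nonneg (hD0 t s),
              abs_of_nonneg (ENNReal.toReal_nonneg : (0:ℝ) ≤ ((π s) a).toReal)]
            exact mul_le_mul_of_nonneg_left (hr s a)
              (mul_nonneg (hD0 t s) ENNReal.toReal_nonneg)
        _ = Rmax := by
            have h1 : ∀ s : S, ∑ a : A, D t s * ((π s) a).toReal * Rmax
                = D t s * Rmax := by
              intro s
              calc ∑ a : A, D t s * ((π s) a).toReal * Rmax
                  = D t s * Rmax * ∑ a : A, ((π s) a).toReal := by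
                    rw [Finset.mul_sum]
                    exact Finset.sum_congr rfl (fun a _ => by ring)
                _ = D t s * Rmax := by rw [pmf_sum_one, mul_one]
            simp only [h1]
            rw [← Finset.sum_mul, hDs, one_mul]
    calc γ ^ t * |∑ s : S, ∑ a : A, D t s * ((π s) a).toReal * r s a|
        ≤ γ ^ t * Rmax := mul_le_mul_of_nonneg_left this (pow_nonneg hγ0 t)
      _ = Rmax * γ ^ t := by ring
  have hsum_v : Summable v := by
    apply Summable.of_norm_bounded ((summable_geometric_of_lt_one hγ0 hγ1).mul_left Rmax)
    intro t
    rw [hv]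
    simp only [Real.norm_eq_abs, abs_mul, abs_pow, abs_of_nonneg hγ0]
    have : |∑ s : S, ∑ a : A, D' t s * ((π' s) a).toReal * r s a| ≤ Rmax := by
      calc |∑ s : S, ∑ a : A, D' t s * ((π' s) a).toReal * r s a|
          ≤ ∑ s : S, ∑ a : A, D' t s * ((π' s) a).toReal * Rmax := by
            refine le_trans (Finset.abs_sum_le_sum_abs _ _) (Finset.sum_le_sum fun s _ => ?_)
            refine le_trans (Finset.abs_sum_le_sum_abs _ _) (Finset.sum_le_sum fun a _ => ?_)
            rw [abs_mul, abs_mul, abs_of_nonneg (hD'0 t s),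
              abs_of_nonneg (ENNReal.toReal_nonneg : (0:ℝ) ≤ ((π' s) a).toReal)]
            exact mul_le_mul_of_nonneg_left (hr s a)
              (mul_nonneg (hD'0 t s) ENNReal.toReal_nonneg)
        _ = Rmax := by
            have h1 : ∀ s : S, ∑ a : A, D' t s * ((π' s) a).toReal * Rmax
                = D' t s * Rmax := by
              intro s
              calc ∑ a : A, D' t s * ((π' s) a).toReal * Rmax
                  = D' t s * Rmax * ∑ a : A, ((π' s) a).toReal := by
                    rw [Finset.mul_sum]
                    exact Finset.sum_congr rfl (fun a _ => by ring)
                _ = D' t s * Rmax := by rw [pmf_sum_one, mul_one]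
            simp only [h1]
            rw [← Finset.sum_mul, hD's, one_mul]
    calc γ ^ t * |∑ s : S, ∑ a : A, D' t s * ((π' s) a).toReal * r s a|
        ≤ γ ^ t * Rmax := mul_le_mul_of_nonneg_left this (pow_nonneg hγ0 t)
      _ = Rmax * γ ^ t := by ring
  -- |J - J'| ≤ Rmax * S₁ / (1 - γ)
  have hJ : |expReturn T π ρ₀ γ r - expReturn T π' ρ₀ γ r| ≤ Rmax * S₁ / (1 - γ) := by
    have hJeq : expReturn T π ρ₀ γ r - expReturn T π' ρ₀ γ r = ∑' t : ℕ, (u t - v t) :=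
      (hsum_u.tsum_sub hsum_v).symm
    have hsum_uv : Summable (fun t => u t - v t) := hsum_u.sub hsum_v
    have hsum_rhs : Summable (fun t : ℕ => Rmax * (γ ^ t * e t + γ ^ t * Δ t)) :=
      (hsum_e.add hsum_Δ).mul_left Rmax
    calc |expReturn T π ρ₀ γ r - expReturn T π' ρ₀ γ r|
        = |∑' t : ℕ, (u t - v t)| := by rw [hJeq]
      _ ≤ ∑' t : ℕ, |u t - v t| := by
          have := norm_tsum_le_tsum_norm (f := fun t => u t - v t) (by
            simpa only [Real.norm_eq_abs] using hsum_uv.abs)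
          simpa only [Real.norm_eq_abs] using this
      _ ≤ ∑' t : ℕ, Rmax * (γ ^ t * e t + γ ^ t * Δ t) :=
          Summable.tsum_le_tsum hbound hsum_uv.abs hsum_rhs
      _ = Rmax * (S₁ + ∑' t : ℕ, γ ^ t * Δ t) := by
          rw [tsum_mul_left, Summable.tsum_add hsum_e hsum_Δ]
      _ ≤ Rmax * (S₁ + γ / (1 - γ) * S₁) := by
          apply mul_le_mul_of_nonneg_left _ hR
          linarith
      _ = Rmax * S₁ / (1 - γ) := by
          have h : S₁ + γ / (1 - γ) * S₁ = S₁ / (1 - γ) := by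
            field_simp
            ring
          rw [h, mul_div_assoc]
  -- relate S₁ to the occupancy sum
  have hocc : ∑ s : S, stateOcc T π ρ₀ γ s * c s = (1 - γ) * S₁ := by
    have h1 : ∀ s : S, stateOcc T π ρ₀ γ s * c s
        = (1 - γ) * ∑' t : ℕ, γ ^ t * D t s * c s := by
      intro s
      unfold stateOcc
      rw [mul_assoc, ← tsum_mul_right]
    have h2 : ∀ s : S, Summable (fun t : ℕ => γ ^ t * D t s * c s) := by
      intro s
      exact (summable_dist T π ρ₀ γ hγ0 hγ1 s).mul_right (c s)
    calc ∑ s : S, stateOcc T π ρ₀ γ s * c s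
        = ∑ s : S, (1 - γ) * ∑' t : ℕ, γ ^ t * D t s * c s := Finset.sum_congr rfl (fun s _ => h1 s)
      _ = (1 - γ) * ∑ s : S, ∑' t : ℕ, γ ^ t * D t s * c s := by rw [Finset.mul_sum]
      _ = (1 - γ) * ∑' t : ℕ, ∑ s : S, γ ^ t * D t s * c s := by
          rw [← Summable.tsum_finsetSum (fun s _ => h2 s)]
      _ = (1 - γ) * S₁ := by
          congr 1
          apply tsum_congr
          intro t
          rw [he]
          simp only
          rw [Finset.mul_sum]
          exact Finset.sum_congr rfl (fun s _ => by ring)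
  -- final assembly
  have hfinal : Rmax * S₁ / (1 - γ)
      = (Rmax / (1 - γ) ^ 2) * ((1 - γ) * S₁) := by
    rw [div_mul_eq_mul_div, pow_two]
    rw [eq_div_iff (by positivity : ((1:ℝ) - γ) * (1 - γ) ≠ 0)]
    field_simp
  calc |expReturn T π ρ₀ γ r - expReturn T π' ρ₀ γ r|
      ≤ Rmax * S₁ / (1 - γ) := hJ
    _ = (Rmax / (1 - γ) ^ 2) * ((1 - γ) * S₁) := hfinal
    _ = (Rmax / (1 - γ) ^ 2) * ∑ s : S, stateOcc T π ρ₀ γ s * c s := by rw [hocc]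
    _ = (Rmax / (1 - γ) ^ 2) * ∑ s : S, stateOcc T π ρ₀ γ s *
        (∑ a : A, |((π s) a).toReal - ((π' s) a).toReal|) := rfl
end Perf

/-- **Error bound for quantum behavioural cloning.** If the true softmax policy `π_θ`
is built from observable expectation values `f` and the measured softmax policy
`π̃_θ` from values `f̃` with `|f − f̃| ≤ ε` pointwise, and the behavioural-cloning
optimization error, i.e. the expected KL divergence (under `d_{π_E}`) between the
expert policy `π_E` and `π̃_θ`, is at most `δ`, then
`|J(π_E) − J(π_θ)| ≤ (2 R_MAX/(1−γ)²) (sinh(2βε) + √2 √δ)`. -/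
theorem qbc_error_bound {S A : Type*} [Fintype S] [Fintype A]
    [Nonempty S] [Nonempty A]
    (γ : ℝ) (hγ0 : 0 ≤ γ) (hγ1 : γ < 1)
    (T : S → A → PMF S) (ρ₀ : PMF S)
    (r : S → A → ℝ) (Rmax : ℝ) (hr : ∀ (s : S) (a : A), |r s a| ≤ Rmax)
    (β ε δ : ℝ) (hβ : 0 < β) (hε : 0 ≤ ε) (hδ : 0 ≤ δ)
    (f ftilde : S → A → ℝ) (hf : ∀ (s : S) (a : A), |f s a - ftilde s a| ≤ ε)
    (πθ πθtilde πE : S → PMF A)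
    (hπθ : ∀ (s : S) (a : A), ((πθ s) a).toReal = softmax β (f s) a)
    (hπθtilde : ∀ (s : S) (a : A), ((πθtilde s) a).toReal = softmax β (ftilde s) a)
    (hKL : ∑ s : S, stateOcc T πE ρ₀ γ s *
        klDiv (fun a => ((πE s) a).toReal) (fun a => ((πθtilde s) a).toReal) ≤ δ) :
    |expReturn T πE ρ₀ γ r - expReturn T πθ ρ₀ γ r| ≤
      (2 * Rmax / (1 - γ) ^ 2) *
        (Real.sinh (2 * β * ε) + Real.sqrt 2 * Real.sqrt δ) := by
  classical
  have h1γ : (0:ℝ) < 1 - γ := by linarith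
  have s0 : S := Classical.arbitrary S
  have a0 : A := Classical.arbitrary A
  have hR : 0 ≤ Rmax := le_trans (abs_nonneg _) (hr s0 a0)
  have hcoef : 0 ≤ Rmax / (1 - γ) ^ 2 := by positivity
  -- Part A : expert vs measured policy
  have hA := perf_diff γ hγ0 hγ1 T ρ₀ r Rmax hr hR πE πθtilde
  -- Part B : measured vs ideal policy
  have hB := perf_diff γ hγ0 hγ1 T ρ₀ r Rmax hr hR πθtilde πθ
  set K : S → ℝ := fun s =>
    klDiv (fun a => ((πE s) a).toReal) (fun a => ((πθtilde s) a).toReal) with hKdef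
  have hq_pos : ∀ s a, 0 < ((πθtilde s) a).toReal := by
    intro s a; rw [hπθtilde]; exact softmax_pos β (ftilde s) a
  have hq_sum : ∀ s, ∑ a : A, ((πθtilde s) a).toReal = 1 := fun s => pmf_sum_one _
  have hp_sum : ∀ s, ∑ a : A, ((πE s) a).toReal = 1 := fun s => pmf_sum_one _
  have hp_nonneg : ∀ (s : S) (a : A), (0:ℝ) ≤ ((πE s) a).toReal :=
    fun s a => ENNReal.toReal_nonneg
  have hK0 : ∀ s, 0 ≤ K s := fun s =>
    klDiv_nonneg _ _ (hp_nonneg s) (hq_pos s) (hp_sum s) (hq_sum s)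
  have hL1A : ∀ s : S, ∑ a : A, |((πE s) a).toReal - ((πθtilde s) a).toReal|
      ≤ 2 * Real.sqrt (K s) := fun s =>
    l1_le_two_sqrt_klDiv _ _ (hp_nonneg s) (hq_pos s) (hp_sum s) (hq_sum s)
  set occE : S → ℝ := fun s => stateOcc T πE ρ₀ γ s with hoccEdef
  have hoccE0 : ∀ s, 0 ≤ occE s := fun s => stateOcc_nonneg T πE ρ₀ γ hγ0 hγ1 s
  have hoccE1 : ∑ s : S, occE s = 1 := stateOcc_sum_one T πE ρ₀ γ hγ0 hγ1
  -- Cauchy–Schwarz step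
  have hCS : ∑ s : S, occE s * Real.sqrt (K s) ≤ Real.sqrt δ := by
    have hterm : ∀ s : S, occE s * Real.sqrt (K s)
        = Real.sqrt (occE s) * Real.sqrt (occE s * K s) := by
      intro s
      rw [Real.sqrt_mul (hoccE0 s), ← mul_assoc,
        Real.mul_self_sqrt (hoccE0 s)]
    have hcs2 := Finset.sum_mul_sq_le_sq_mul_sq Finset.univ
      (fun s => Real.sqrt (occE s)) (fun s => Real.sqrt (occE s * K s))
    simp only [Real.sq_sqrt (hoccE0 _),
      Real.sq_sqrt (mul_nonneg (hoccE0 _) (hK0 _))] at hcs2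
    rw [hoccE1, one_mul] at hcs2
    have hKsum : ∑ s : S, occE s * K s ≤ δ := hKL
    have hsum_nonneg : 0 ≤ ∑ s : S, occE s * Real.sqrt (K s) :=
      Finset.sum_nonneg (fun s _ => mul_nonneg (hoccE0 s) (Real.sqrt_nonneg _))
    rw [Finset.sum_congr rfl (fun s _ => hterm s)]
    have h1 : (∑ s : S, Real.sqrt (occE s) * Real.sqrt (occE s * K s)) ^ 2 ≤ δ :=
      le_trans hcs2 hKsum
    have h2 : 0 ≤ ∑ s : S, Real.sqrt (occE s) * Real.sqrt (occE s * K s) :=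
      Finset.sum_nonneg (fun s _ => mul_nonneg (Real.sqrt_nonneg _) (Real.sqrt_nonneg _))
    exact (Real.le_sqrt h2 hδ).2 h1
  have hAsum : ∑ s : S, stateOcc T πE ρ₀ γ s *
      (∑ a : A, |((πE s) a).toReal - ((πθtilde s) a).toReal|) ≤ 2 * Real.sqrt δ := by
    calc ∑ s : S, stateOcc T πE ρ₀ γ s *
        (∑ a : A, |((πE s) a).toReal - ((πθtilde s) a).toReal|)
        ≤ ∑ s : S, occE s * (2 * Real.sqrt (K s)) :=
          Finset.sum_le_sum (fun s _ => mul_le_mul_of_nonneg_left (hL1A s) (hoccE0 s))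
      _ = 2 * ∑ s : S, occE s * Real.sqrt (K s) := by
          rw [Finset.mul_sum]
          exact Finset.sum_congr rfl (fun s _ => by ring)
      _ ≤ 2 * Real.sqrt δ := by linarith
  have hJA : |expReturn T πE ρ₀ γ r - expReturn T πθtilde ρ₀ γ r|
      ≤ (Rmax / (1 - γ) ^ 2) * (2 * Real.sqrt δ) :=
    le_trans hA (mul_le_mul_of_nonneg_left hAsum hcoef)
  -- Part B bound
  have hL1B : ∀ s : S, ∑ a : A, |((πθtilde s) a).toReal - ((πθ s) a).toReal|
      ≤ 2 * Real.sinh (2 * β * ε) := by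
    intro s
    have hxy : ∀ a : A, |ftilde s a - f s a| ≤ ε := fun a => by
      rw [abs_sub_comm]; exact hf s a
    have := softmax_l1 β ε hβ hε (ftilde s) (f s) hxy
    calc ∑ a : A, |((πθtilde s) a).toReal - ((πθ s) a).toReal|
        = ∑ a : A, |softmax β (ftilde s) a - softmax β (f s) a| := by
          exact Finset.sum_congr rfl (fun a _ => by rw [hπθtilde, hπθ])
      _ ≤ 2 * Real.sinh (2 * β * ε) := this
  have hBsum : ∑ s : S, stateOcc T πθtilde ρ₀ γ s *
      (∑ a : A, |((πθtilde s) a).toReal - ((πθ s) a).toReal|)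
      ≤ 2 * Real.sinh (2 * β * ε) := by
    have hocc0 : ∀ s, 0 ≤ stateOcc T πθtilde ρ₀ γ s :=
      fun s => stateOcc_nonneg T πθtilde ρ₀ γ hγ0 hγ1 s
    calc ∑ s : S, stateOcc T πθtilde ρ₀ γ s *
        (∑ a : A, |((πθtilde s) a).toReal - ((πθ s) a).toReal|)
        ≤ ∑ s : S, stateOcc T πθtilde ρ₀ γ s * (2 * Real.sinh (2 * β * ε)) :=
          Finset.sum_le_sum (fun s _ => mul_le_mul_of_nonneg_left (hL1B s) (hocc0 s))
      _ = (∑ s : S, stateOcc T πθtilde ρ₀ γ s) * (2 * Real.sinh (2 * β * ε)) :=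
          (Finset.sum_mul _ _ _).symm
      _ = 2 * Real.sinh (2 * β * ε) := by
          rw [stateOcc_sum_one T πθtilde ρ₀ γ hγ0 hγ1, one_mul]
  have hJB : |expReturn T πθtilde ρ₀ γ r - expReturn T πθ ρ₀ γ r|
      ≤ (Rmax / (1 - γ) ^ 2) * (2 * Real.sinh (2 * β * ε)) :=
    le_trans hB (mul_le_mul_of_nonneg_left hBsum hcoef)
  -- combine
  have htri : |expReturn T πE ρ₀ γ r - expReturn T πθ ρ₀ γ r|
      ≤ |expReturn T πE ρ₀ γ r - expReturn T πθtilde ρ₀ γ r|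
        + |expReturn T πθtilde ρ₀ γ r - expReturn T πθ ρ₀ γ r| :=
    abs_sub_le _ _ _
  have hsqrt2 : Real.sqrt δ ≤ Real.sqrt 2 * Real.sqrt δ := by
    have h2 : (1:ℝ) ≤ Real.sqrt 2 := by
      rw [show (1:ℝ) = Real.sqrt 1 from (Real.sqrt_one).symm]
      exact Real.sqrt_le_sqrt (by norm_num)
    nlinarith [Real.sqrt_nonneg δ]
  have hkey : (Rmax / (1 - γ) ^ 2) * (2 * Real.sqrt δ)
      + (Rmax / (1 - γ) ^ 2) * (2 * Real.sinh (2 * β * ε))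
      ≤ (2 * Rmax / (1 - γ) ^ 2) *
        (Real.sinh (2 * β * ε) + Real.sqrt 2 * Real.sqrt δ) := by
    have hexp : (2 * Rmax / (1 - γ) ^ 2) *
        (Real.sinh (2 * β * ε) + Real.sqrt 2 * Real.sqrt δ)
        = (Rmax / (1 - γ) ^ 2) * (2 * Real.sinh (2 * β * ε))
          + (Rmax / (1 - γ) ^ 2) * (2 * (Real.sqrt 2 * Real.sqrt δ)) := by
      field_simp
    rw [hexp]
    have : (Rmax / (1 - γ) ^ 2) * (2 * Real.sqrt δ)
        ≤ (Rmax / (1 - γ) ^ 2) * (2 * (Real.sqrt 2 * Real.sqrt δ)) :=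
      mul_le_mul_of_nonneg_left (by linarith) hcoef
    linarith
  linarith
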